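/- There exists a network with integral arc capacities, two demand scenarios, and a set of fixed arcs such that every integral robust flow (a pair of integral feasible flows agreeing on fixed arcs) has strictly larger maximum scenario cost than some fractional robust flow. Concretely: in a digraph with all capacities 1, the optimal integral robust flow cost can be strictly larger than the optimal fractional robust flow cost. -/

import Mathlib

open Finset

/-- A network: digraph with arc set `A`, vertex set `V`, a partition of arcs into
fixed (`isFixed = true`) and free arcs, integral capacities `u` and costs `c`. -/
structure Net (V A : Type) where
  src : A → V
  dst : A → V
  isFixed : A → Bool
  u : A → ℤ
  c : A → ℤ

variable {V A : Type} [Fintype V] [Fintype A] [DecidableEq V]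

/-- Net outflow minus inflow of an integral flow at a vertex. -/
def excess (N : Net V A) (f : A → ℤ) (v : V) : ℤ :=
  ∑ a ∈ univ.filter (fun a => N.src a = v), f a -
    ∑ a ∈ univ.filter (fun a => N.dst a = v), f a

/-- An integral `b`-flow: capacity constraints and flow balance constraints. -/
def IsFlow (N : Net V A) (b : V → ℤ) (f : A → ℤ) : Prop :=
  (∀ a, 0 ≤ f a ∧ f a ≤ N.u a) ∧ ∀ v, excess N f v = b v

def cost (N : Net V A) (f : A → ℤ) : ℤ := ∑ a, N.c a * f a

/-- An integral robust `b`-flow: a tuple of scenario flows agreeing on fixed arcs. -/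
def IsRobust {Λ : Type} (N : Net V A) (b : Λ → V → ℤ) (f : Λ → A → ℤ) : Prop :=
  (∀ lam, IsFlow N (b lam) (f lam)) ∧
    ∀ lam lam' a, N.isFixed a = true → f lam a = f lam' a

/-- Cost of a robust flow: maximum scenario cost. -/
def robustCost {Λ : Type} [Fintype Λ] [Nonempty Λ] (N : Net V A) (f : Λ → A → ℤ) : ℤ :=
  univ.sup' univ_nonempty fun lam => cost N (f lam)

/-- Fractional (rational-valued) versions. -/
def qexcess (N : Net V A) (f : A → ℚ) (v : V) : ℚ :=
  ∑ a ∈ univ.filter (fun a => N.src a = v), f a -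
    ∑ a ∈ univ.filter (fun a => N.dst a = v), f a

def QIsFlow (N : Net V A) (b : V → ℤ) (f : A → ℚ) : Prop :=
  (∀ a, 0 ≤ f a ∧ f a ≤ (N.u a : ℚ)) ∧ ∀ v, qexcess N f v = (b v : ℚ)

def qcost (N : Net V A) (f : A → ℚ) : ℚ := ∑ a, (N.c a : ℚ) * f a

def QIsRobust {Λ : Type} (N : Net V A) (b : Λ → V → ℤ) (f : Λ → A → ℚ) : Prop :=
  (∀ lam, QIsFlow N (b lam) (f lam)) ∧
    ∀ lam lam' a, N.isFixed a = true → f lam a = f lam' a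

def qRobustCost {Λ : Type} [Fintype Λ] [Nonempty Λ] (N : Net V A) (f : Λ → A → ℚ) : ℚ :=
  univ.sup' univ_nonempty fun lam => qcost N (f lam)

/-- There is a network with all capacities equal to `1`, nonnegative
costs, and two demand scenarios, in which some fractional robust flow has strictly
smaller (maximum scenario) cost than every integral robust flow; in particular the
optimal integral robust flow cost is strictly larger than the optimal fractional one. -/
theorem integrality_gap_exists :
    ∃ (nV nA : ℕ) (N : Net (Fin nV) (Fin nA)) (b : Fin 2 → Fin nV → ℤ),
      (∀ a, N.u a = 1) ∧
      (∀ a, 0 ≤ N.c a) ∧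
      (∀ lam, ∑ v, b lam v = 0) ∧
      (∃ f : Fin 2 → Fin nA → ℤ, IsRobust N b f) ∧
      (∃ g : Fin 2 → Fin nA → ℚ,
        QIsRobust N b g ∧
        ∀ f : Fin 2 → Fin nA → ℤ, IsRobust N b f →
          qRobustCost N g < (robustCost N f : ℚ)) := by
  classical
  refine ⟨2, 3, ⟨![0,0,1], ![1,1,0], ![true,false,false], ![1,1,1], ![0,1,1]⟩,
    ![![1,-1], ![0,0]], ?_, ?_, ?_, ?_, ?_⟩
  · intro a; fin_cases a <;> rfl
  · intro a; fin_cases a <;> norm_num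
  · intro lam; fin_cases lam <;> simp [Fin.sum_univ_two]
  · refine ⟨![![0,1,0], ![0,0,0]], ?_, ?_⟩
    · intro lam
      constructor
      · intro a; fin_cases lam <;> fin_cases a <;> norm_num
      · intro v; fin_cases lam <;> fin_cases v <;>
          simp [excess, Finset.sum_filter, Fin.sum_univ_three]
    · intro lam lam' a h
      fin_cases a
      · fin_cases lam <;> fin_cases lam' <;> rfl
      · simp at h
      · simp at h
  · refine ⟨![![1/2, 1/2, 0], ![1/2, 0, 1/2]], ⟨?_, ?_⟩, ?_⟩
    · intro lam
      constructor
      · intro a; fin_cases lam <;> fin_cases a <;> norm_num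
      · intro v; fin_cases lam <;> fin_cases v <;>
          simp [qexcess, Finset.sum_filter, Fin.sum_univ_three] <;> norm_num
    · intro lam lam' a h
      fin_cases a
      · fin_cases lam <;> fin_cases lam' <;> rfl
      · simp at h
      · simp at h
    · intro f hf
      -- qRobustCost of g is at most 1/2
      have hq : qRobustCost ⟨![0,0,1], ![1,1,0], ![true,false,false], ![1,1,1], ![(0:ℤ),1,1]⟩
          ![![(1:ℚ)/2, 1/2, 0], ![1/2, 0, 1/2]] ≤ 1/2 := by
        apply Finset.sup'_le
        intro lam _
        fin_cases lam <;> simp [qcost, Fin.sum_univ_three, Matrix.vecHead, Matrix.vecTail] <;> norm_num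
      -- bounds on f
      obtain ⟨hflow, hfix⟩ := hf
      have hfix0 : f 0 0 = f 1 0 := hfix 0 1 0 rfl
      have hb0 := (hflow 0).2 0
      have hb1 := (hflow 1).2 0
      simp [excess, Finset.sum_filter, Fin.sum_univ_three] at hb0 hb1
      have hc0 : cost ⟨![0,0,1], ![1,1,0], ![true,false,false], ![1,1,1], ![(0:ℤ),1,1]⟩ (f 0)
          = f 0 1 + f 0 2 := by simp [cost, Fin.sum_univ_three]
      have hc1 : cost ⟨![0,0,1], ![1,1,0], ![true,false,false], ![1,1,1], ![(0:ℤ),1,1]⟩ (f 1)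
          = f 1 1 + f 1 2 := by simp [cost, Fin.sum_univ_three]
      have hle0 : cost ⟨![0,0,1], ![1,1,0], ![true,false,false], ![1,1,1], ![(0:ℤ),1,1]⟩ (f 0)
          ≤ robustCost ⟨![0,0,1], ![1,1,0], ![true,false,false], ![1,1,1], ![(0:ℤ),1,1]⟩ f :=
        by unfold robustCost; exact Finset.le_sup' (fun lam => cost ⟨![0,0,1], ![1,1,0], ![true,false,false], ![1,1,1], ![(0:ℤ),1,1]⟩ (f lam)) (Finset.mem_univ (0 : Fin 2))
      have hle1 : cost ⟨![0,0,1], ![1,1,0], ![true,false,false], ![1,1,1], ![(0:ℤ),1,1]⟩ (f 1)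
          ≤ robustCost ⟨![0,0,1], ![1,1,0], ![true,false,false], ![1,1,1], ![(0:ℤ),1,1]⟩ f :=
        by unfold robustCost; exact Finset.le_sup' (fun lam => cost ⟨![0,0,1], ![1,1,0], ![true,false,false], ![1,1,1], ![(0:ℤ),1,1]⟩ (f lam)) (Finset.mem_univ (1 : Fin 2))
      have hnn : ∀ lam a, (0:ℤ) ≤ f lam a := fun lam a => ((hflow lam).1 a).1
      have h1 : (1:ℤ) ≤ robustCost ⟨![0,0,1], ![1,1,0], ![true,false,false], ![1,1,1], ![(0:ℤ),1,1]⟩ f := by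
        rw [hc0] at hle0; rw [hc1] at hle1
        have := hnn 0 1; have := hnn 0 2; have := hnn 1 1; have := hnn 1 2
        omega
      have : (1:ℚ) ≤ ((robustCost ⟨![0,0,1], ![1,1,0], ![true,false,false], ![1,1,1], ![(0:ℤ),1,1]⟩ f : ℤ) : ℚ) := by
        exact_mod_cast h1
      calc _ ≤ (1:ℚ)/2 := hq
        _ < 1 := by norm_num
        _ ≤ _ := this
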